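/- Let n, n_i, L be positive integers with n_i ≤ n, n dividing L, and n_i dividing L. Let H be a subset of {1,...,n} such that the map h ↦ ⌈n_i·h/n⌉ is a bijection from H onto {1,...,n_i}. Let h_1,...,h_{n_i} be any enumeration of H, and for each s ∈ {1,...,n_i} let m_s = L·h_s/n, let ε_s be a real with 0 < ε_s < 1, and let d_s = (m_s − ε_s)/L. Then for every k ∈ {1,...,n_i} there is exactly one index s ∈ {1,...,n_i} such that d_s lies in the interval ((k−1)/n_i, k/n_i]. (Theorem 1(ii): each slice of the constructed FSLHD is a Latin hypercube column.) -/

import Mathlib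

/-- Theorem 1(ii): each slice of the constructed FSLHD is a Latin hypercube
column. -/
theorem fslhd_slice_lhd (n ni L : ℕ) (hn : 0 < n) (hni : 0 < ni) (hL : 0 < L)
    (hle : ni ≤ n) (hdvd : n ∣ L) (hdvdi : ni ∣ L)
    (H : Finset ℕ) (hH : H ⊆ Finset.Icc 1 n)
    (hbij : Set.BijOn (fun x : ℕ => ⌈(ni * x : ℚ) / n⌉) ↑H (Set.Icc 1 (ni : ℤ)))
    (h : Fin ni → ℕ) (hinj : Function.Injective h)
    (hmem : ∀ s, h s ∈ H) (hsurj : ∀ x ∈ H, ∃ s, h s = x)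
    (ε : Fin ni → ℝ) (hε : ∀ s, 0 < ε s ∧ ε s < 1)
    (d : Fin ni → ℝ)
    (hd : ∀ s, d s = ((L : ℝ) * (h s : ℝ) / n - ε s) / L) :
    ∀ k ∈ Finset.Icc 1 ni, ∃! s : Fin ni,
      ((k : ℝ) - 1) / ni < d s ∧ d s ≤ (k : ℝ) / ni := by
  obtain ⟨a, ha⟩ := hdvd
  obtain ⟨b, hb⟩ := hdvdi
  have hnR : (0:ℝ) < n := by exact_mod_cast hn
  have hniR : (0:ℝ) < ni := by exact_mod_cast hni
  have hLR : (0:ℝ) < L := by exact_mod_cast hL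
  set c : Fin ni → ℤ := fun s => ⌈(ni * (h s) : ℚ) / n⌉ with hc
  -- key per-index bounds
  have key : ∀ s : Fin ni, ((c s : ℝ) - 1) / ni < d s ∧ d s ≤ (c s : ℝ) / ni := by
    intro s
    have hnQ : (0:ℚ) < n := by exact_mod_cast hn
    -- integer inequalities
    have hub : (ni : ℤ) * (h s) ≤ c s * n := by
      simp only [hc]
      have := Int.le_ceil (((ni : ℚ) * (h s)) / n)
      rw [div_le_iff₀ hnQ] at this
      exact_mod_cast this
    have hlb : (c s - 1) * n < (ni : ℤ) * (h s) := by
      have := Int.ceil_lt_add_one (((ni : ℚ) * (h s)) / n)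
      have hcs0 : (c s : ℚ) < ((ni : ℚ) * (h s)) / n + 1 := by
        simp only [hc]; exact_mod_cast this
      have h2 : ((c s : ℚ) - 1) * n < (ni * (h s) : ℚ) := by
        rw [sub_mul, sub_lt_iff_lt_add, one_mul]
        calc (c s : ℚ) * n = ((c s : ℚ)) * n := rfl
        _ < ((ni * (h s) : ℚ) / n + 1) * n := by
            exact mul_lt_mul_of_pos_right hcs0 hnQ
        _ = (ni * (h s) : ℚ) + n := by field_simp
      exact_mod_cast h2
    -- deduce integer bounds on a * h s relative to b
    have hub' : (a : ℤ) * (h s) ≤ c s * b := by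
      have h1 : (ni : ℤ) * (h s) * a ≤ c s * n * a := by
        exact mul_le_mul_of_nonneg_right hub (by positivity)
      have hLi : (n : ℤ) * a = ni * b := by exact_mod_cast ha ▸ hb
      have : (ni : ℤ) * ((h s) * a) ≤ c s * (ni * b) := by
        calc (ni : ℤ) * ((h s) * a) = ni * (h s) * a := by ring
        _ ≤ c s * n * a := h1
        _ = c s * (n * a) := by ring
        _ = c s * (ni * b) := by rw [hLi]
      have := le_of_mul_le_mul_left (by linarith [this] : (ni:ℤ) * ((h s) * a) ≤ ni * (c s * b)) (by exact_mod_cast hni)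
      linarith [this]
    have hlb' : (c s - 1) * b + 1 ≤ (a : ℤ) * (h s) := by
      have h1 : (c s - 1) * n * a < (ni : ℤ) * (h s) * a := by
        apply mul_lt_mul_of_pos_right hlb
        have : 0 < a := by
          by_contra hne
          push_neg at hne
          interval_cases a
          omega
        exact_mod_cast this
      have hLi : (n : ℤ) * a = ni * b := by exact_mod_cast ha ▸ hb
      have h2 : (ni:ℤ) * ((c s - 1) * b) < ni * ((h s) * a) := by
        calc (ni:ℤ) * ((c s - 1) * b) = (c s - 1) * (ni * b) := by ring
        _ = (c s - 1) * (n * a) := by rw [hLi]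
        _ = (c s - 1) * n * a := by ring
        _ < ni * (h s) * a := h1
        _ = ni * ((h s) * a) := by ring
      have := lt_of_mul_lt_mul_left h2 (by positivity : (0:ℤ) ≤ ni)
      linarith [this]
    -- real form of d s
    have hds : d s = ((a : ℝ) * (h s) - ε s) / ((ni : ℝ) * b) := by
      rw [hd s]
      have hL1 : (L : ℝ) = n * a := by exact_mod_cast ha
      have hL2 : (L : ℝ) = ni * b := by exact_mod_cast hb
      have e1 : (L:ℝ) * (h s) / n = a * (h s) := by
        rw [hL1]; field_simp
      rw [e1, hL2]
    have hbR : (0:ℝ) < b := by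
      have : 0 < b := by
        by_contra hne; push_neg at hne; interval_cases b; omega
      exact_mod_cast this
    obtain ⟨hε0, hε1⟩ := hε s
    constructor
    · rw [hds, div_lt_div_iff₀ hniR (by positivity)]
      have h3 : ((c s : ℝ) - 1) * b + 1 ≤ (a : ℝ) * (h s) := by exact_mod_cast hlb'
      nlinarith
    · rw [hds, div_le_div_iff₀ (by positivity) hniR]
      have h3 : (a : ℝ) * (h s) ≤ (c s : ℝ) * b := by exact_mod_cast hub'
      nlinarith
  -- disjointness of intervals: membership pins down c s
  have pin : ∀ (s : Fin ni) (k : ℕ), ((k : ℝ) - 1) / ni < d s → d s ≤ (k : ℝ) / ni →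
      c s = (k : ℤ) := by
    intro s k h1 h2
    obtain ⟨l1, l2⟩ := key s
    have e1 : ((c s : ℝ)) - 1 < k := by
      have := l1.trans_le h2
      rw [div_lt_div_iff₀ hniR hniR] at this
      nlinarith
    have e2 : ((k : ℝ)) - 1 < c s := by
      have := h1.trans_le l2
      rw [div_lt_div_iff₀ hniR hniR] at this
      nlinarith
    have : (c s : ℝ) = k := by
      have i1 : (c s : ℤ) ≤ k := by exact_mod_cast Int.lt_add_one_iff.mp (by exact_mod_cast (by linarith : (c s : ℝ) < k + 1))
      have i2 : (k : ℤ) ≤ c s := by exact_mod_cast Int.lt_add_one_iff.mp (by exact_mod_cast (by linarith : (k : ℝ) < c s + 1))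
      exact_mod_cast le_antisymm i1 i2
    exact_mod_cast this
  intro k hk
  simp only [Finset.mem_Icc] at hk
  have hkI : (k : ℤ) ∈ Set.Icc 1 (ni : ℤ) := by
    exact ⟨by exact_mod_cast hk.1, by exact_mod_cast hk.2⟩
  obtain ⟨x, hxH, hx⟩ := hbij.surjOn hkI
  obtain ⟨s, hs⟩ := hsurj x hxH
  refine ⟨s, ?_, ?_⟩
  · have hcs : c s = (k : ℤ) := by
      simp only [hc]
      rw [hs]
      exact hx
    obtain ⟨l1, l2⟩ := key s
    rw [hcs] at l1 l2
    push_cast at l1 l2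
    exact ⟨l1, l2⟩
  · intro t ⟨h1, h2⟩
    have hct : c t = (k : ℤ) := pin t k h1 h2
    have hcs : c s = (k : ℤ) := by
      simp only [hc]; rw [hs]; exact hx
    have : h t = h s := by
      apply hbij.injOn (hmem t) (hmem s)
      simp only [hc] at hct hcs
      simp [hct, hcs]
    exact hinj this
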